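/- Let A : U → Ũ and C : ℝ^{r,s} → ℝ^{s,r} satisfy A^τ J̃_z A = J_{C^τ(z)} for all z, with C C^τ = C^τ C = −Id and r ≠ s. Then for any odd number p = 2m+1 of orthonormal basis vectors z_1,…,z_p of ℝ^{r,s}: A^τ A · (J_{z_1}···J_{z_p}) · A^τ A = −J_{z_1}···J_{z_p}. -/

import Mathlib

private lemma conj_aux {R : Type*} [Ring R] :
    ∀ (l : List R) (X Y : R), (∀ K ∈ l, X * K = -(K * Y) ∧ Y * K = -(K * X)) →
      X * l.prod = (-1 : R) ^ l.length * (l.prod * if Even l.length then X else Y)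
  | [], X, Y, _ => by simp
  | a :: l, X, Y, h => by
    have ha := (h a List.mem_cons_self).1
    have ih := conj_aux l Y X (fun K hK =>
      ⟨(h K (List.mem_cons_of_mem a hK)).2, (h K (List.mem_cons_of_mem a hK)).1⟩)
    have hsel : (if Even (l.length + 1) then X else Y) = (if Even l.length then Y else X) := by
      by_cases hev : Even l.length <;> simp [Nat.even_add_one, hev]
    rw [List.prod_cons, List.length_cons, hsel, ← mul_assoc, ha, neg_mul, mul_assoc, ih]
    rcases Nat.even_or_odd l.length with he | ho
    · rw [he.neg_one_pow, Odd.neg_one_pow he.add_one]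
      noncomm_ring
    · rw [ho.neg_one_pow, Even.neg_one_pow ho.add_one]
      noncomm_ring



/-- The standard pseudo-Euclidean bilinear form of signature `(r, n - r)` on `ℝⁿ`. -/
noncomputable def stdForm (n r : ℕ) : LinearMap.BilinForm ℝ (Fin n → ℝ) :=
  Matrix.toBilin' (Matrix.diagonal fun i : Fin n => if (i : ℕ) < r then (1 : ℝ) else -1)

/-- Under the isomorphism relation `Aᵀ J̃_z A = J_{Cᵀ z}` with
`C Cᵀ = Cᵀ C = -Id` and `r ≠ s`, for an odd number `p = 2m+1` of orthonormal vectors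
`z_1, …, z_p` of `ℝ^{r,s}` one has `Aᵀ A ∘ (J_{z_1} ⋯ J_{z_p}) ∘ Aᵀ A = -J_{z_1} ⋯ J_{z_p}`. -/
theorem AtauA_conjugates_odd_product_to_neg
    {U W : Type*}
    [AddCommGroup U] [Module ℝ U] [FiniteDimensional ℝ U]
    [AddCommGroup W] [Module ℝ W] [FiniteDimensional ℝ W]
    (n r s : ℕ) (hn : r + s = n) (hrs : r ≠ s)
    (BU : LinearMap.BilinForm ℝ U) (hBUnd : BU.Nondegenerate)
    (hBUsymm : ∀ x y : U, BU x y = BU y x)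
    (BW : LinearMap.BilinForm ℝ W) (hBWnd : BW.Nondegenerate)
    (hBWsymm : ∀ x y : W, BW x y = BW y x)
    (J : (Fin n → ℝ) →ₗ[ℝ] Module.End ℝ U)
    (hJ : ∀ z, J z * J z = -(stdForm n r z z) • (1 : Module.End ℝ U))
    (hJskew : ∀ (z : Fin n → ℝ) (x y : U), BU (J z x) y + BU x (J z y) = 0)
    (J' : (Fin n → ℝ) →ₗ[ℝ] Module.End ℝ W)
    (hJ' : ∀ w, J' w * J' w = -(stdForm n s w w) • (1 : Module.End ℝ W))
    (hJ'skew : ∀ (w : Fin n → ℝ) (x y : W), BW (J' w x) y + BW x (J' w y) = 0)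
    (A : U →ₗ[ℝ] W) (hA : Function.Bijective A)
    (C : (Fin n → ℝ) →ₗ[ℝ] (Fin n → ℝ)) (hC : Function.Bijective C)
    (Aτ : W →ₗ[ℝ] U) (hAτ : ∀ (x : U) (y : W), BW (A x) y = BU x (Aτ y))
    (Cτ : (Fin n → ℝ) →ₗ[ℝ] (Fin n → ℝ))
    (hCτ : ∀ z w : Fin n → ℝ, stdForm n s (C z) w = stdForm n r z (Cτ w))
    (hrel : ∀ w : Fin n → ℝ,
      (Aτ ∘ₗ (J' w : W →ₗ[ℝ] W) ∘ₗ A : U →ₗ[ℝ] U) = J (Cτ w))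
    (hCCτ : C ∘ₗ Cτ = -LinearMap.id) (hCτC : Cτ ∘ₗ C = -LinearMap.id)
    (m : ℕ) (z : Fin (2 * m + 1) → (Fin n → ℝ))
    (hz : ∀ i, stdForm n r (z i) (z i) = 1 ∨ stdForm n r (z i) (z i) = -1)
    (hzo : ∀ i j, i ≠ j → stdForm n r (z i) (z j) = 0) :
    (Aτ ∘ₗ A : Module.End ℝ U) * (List.ofFn fun i => J (z i)).prod *
        (Aτ ∘ₗ A : Module.End ℝ U) =
      -(List.ofFn fun i => J (z i)).prod := by
  set B : Module.End ℝ U := Aτ ∘ₗ A with hBdef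
  -- Aτ is bijective
  have hAτinj : Function.Injective Aτ := by
    rw [injective_iff_map_eq_zero]
    intro y hy
    apply hBWnd.1
    intro w
    obtain ⟨x, rfl⟩ := hA.2 w
    rw [hBWsymm, hAτ, hy, map_zero]
  have hfr : Module.finrank ℝ U = Module.finrank ℝ W :=
    (LinearEquiv.ofBijective A hA).finrank_eq
  have hAτbij : Function.Bijective Aτ :=
    ⟨hAτinj, (LinearMap.injective_iff_surjective_of_finrank_eq_finrank hfr.symm).mp hAτinj⟩
  set eA := LinearEquiv.ofBijective A hA with heA
  set eAτ := LinearEquiv.ofBijective Aτ hAτbij with heAτ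
  set Binv : Module.End ℝ U := (eA.symm : W →ₗ[ℝ] U) ∘ₗ (eAτ.symm : U →ₗ[ℝ] W) with hBinvdef
  have hAsymm : ∀ y : W, A (eA.symm y) = y := fun y => eA.apply_symm_apply y
  have hAτsymm : ∀ y : U, Aτ (eAτ.symm y) = y := fun y => eAτ.apply_symm_apply y
  have hsymmA : ∀ x : U, eA.symm (A x) = x := fun x => eA.symm_apply_apply x
  have hsymmAτ : ∀ x : W, eAτ.symm (Aτ x) = x := fun x => eAτ.symm_apply_apply x
  have hBBinv : B * Binv = 1 := by
    apply LinearMap.ext; intro x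
    simp only [Module.End.mul_apply, hBinvdef, hBdef, LinearMap.comp_apply,
      LinearEquiv.coe_coe, Module.End.one_apply]
    rw [hAsymm, hAτsymm]
  have hBinvB : Binv * B = 1 := by
    apply LinearMap.ext; intro x
    simp only [Module.End.mul_apply, hBinvdef, hBdef, LinearMap.comp_apply,
      LinearEquiv.coe_coe, Module.End.one_apply]
    rw [hsymmAτ, hsymmA]
  -- per-index facts
  have key : ∀ i, B * J (z i) = -(J (z i) * Binv) ∧ Binv * J (z i) = -(J (z i) * B) := by
    intro i
    set K : Module.End ℝ U := J (z i) with hKdef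
    set q : ℝ := stdForm n r (z i) (z i) with hqdef
    have hq1 : q * q = 1 := by rcases hz i with h | h <;> rw [hqdef, h] <;> norm_num
    have hCτC' : Cτ (C (z i)) = -(z i) := by
      have := LinearMap.congr_fun hCτC (z i)
      simpa using this
    have hKrel : K = -(Aτ ∘ₗ (J' (C (z i)) : W →ₗ[ℝ] W) ∘ₗ A) := by
      have h := hrel (C (z i))
      rw [hCτC', map_neg] at h
      rw [h, neg_neg]
    have hKx : ∀ u : U, K u = -(Aτ (J' (C (z i)) (A u))) := by
      intro u
      rw [hKrel]
      simp [LinearMap.comp_apply]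
    have hwq : stdForm n s (C (z i)) (C (z i)) = -q := by
      rw [hCτ (z i) (C (z i)), hCτC', map_neg, hqdef]
    have hJ'sq : J' (C (z i)) * J' (C (z i)) = q • (1 : Module.End ℝ W) := by
      rw [hJ' (C (z i)), hwq, neg_neg]
    have hK2 : K * K = -q • (1 : Module.End ℝ U) := by
      rw [hKdef, hqdef]; exact hJ (z i)
    have hKBK : K * Binv * K = q • B := by
      apply LinearMap.ext; intro x
      have e1 : Binv (K x) = -(eA.symm (J' (C (z i)) (A x))) := by
        rw [hKx, map_neg]
        simp only [hBinvdef, LinearMap.comp_apply, LinearEquiv.coe_coe]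
        rw [hsymmAτ]
      have e2 : J' (C (z i)) (J' (C (z i)) (A x)) = q • A x := by
        have := LinearMap.congr_fun hJ'sq (A x)
        simpa [Module.End.mul_apply] using this
      rw [Module.End.mul_apply, Module.End.mul_apply, e1, map_neg, hKx, neg_neg,
        hAsymm, e2]
      simp [hBdef, LinearMap.comp_apply]
    -- algebra: derive B * K * B = -K
    have step1 : Binv = q • (K * B * K) := by
      have s1 : K * (K * Binv * K) * K = K * (q • B) * K := by rw [hKBK]
      have l1 : K * (K * Binv * K) * K = (K * K) * (Binv * (K * K)) := by noncomm_ring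
      have l2 : (K * K) * (Binv * (K * K)) = Binv := by
        rw [hK2]
        simp only [smul_mul_assoc, mul_smul_comm, one_mul, mul_one, smul_smul]
        rw [neg_mul_neg, hq1, one_smul]
      have r1 : K * (q • B) * K = q • (K * B * K) := by
        rw [mul_smul_comm, smul_mul_assoc]
      rw [← l2, ← l1, s1, r1]
    have step2 : B * K * B * K = q • 1 := by
      have s2 : B * Binv = q • (B * (K * B * K)) := by
        rw [step1, mul_smul_comm]
      rw [hBBinv] at s2
      have := congrArg (fun x : Module.End ℝ U => q • x) s2
      simp only [smul_smul, hq1, one_smul] at this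
      rw [this]
      noncomm_ring
    have hBKB : B * K * B = -K := by
      have s3 : (B * K * B) * (K * K) = (B * K * B * K) * K := by noncomm_ring
      rw [hK2, step2, smul_mul_assoc, one_mul] at s3
      have s4 : (B * K * B) * (-q • (1 : Module.End ℝ U)) = -q • (B * K * B) := by
        rw [mul_smul_comm, mul_one]
      rw [s4] at s3
      have s5 : ((-q) * (-q)) • (B * K * B) = ((-q) * q) • K := by
        rw [← smul_smul, s3, smul_smul]
      rw [neg_mul_neg, hq1, one_smul, neg_mul, hq1] at s5
      rw [s5, neg_smul, one_smul]
    constructor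
    · conv_lhs => rw [← mul_one (B * K), ← hBBinv, ← mul_assoc]
      rw [hBKB, neg_mul]
    · have h := congrArg (fun x : Module.End ℝ U => Binv * x) hBKB
      simp only [← mul_assoc, hBinvB, one_mul, mul_neg] at h
      rw [h, neg_neg]
  -- assemble
  have hmem : ∀ K ∈ (List.ofFn fun i => J (z i)), B * K = -(K * Binv) ∧ Binv * K = -(K * B) := by
    intro K hK
    rw [List.mem_ofFn] at hK
    obtain ⟨i, rfl⟩ := hK
    exact key i
  have h1 := conj_aux (List.ofFn fun i => J (z i)) B Binv hmem
  have hlen : (List.ofFn fun i => J (z i)).length = 2 * m + 1 := List.length_ofFn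
  have hodd : Odd (2 * m + 1) := ⟨m, by ring⟩
  rw [hlen, hodd.neg_one_pow, if_neg (Nat.not_even_iff_odd.mpr hodd)] at h1
  rw [h1, neg_one_mul, neg_mul, mul_assoc, hBinvB, mul_one]
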